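/- Let A be a Banach algebra, regarded as a subalgebra of A** via the canonical embedding. (1) If Z̃₁ℓ(A**) = A, then A is a right ideal in (A**, first Arens product). (2) If Z̃₁ʳ(A**) = A, then A is a left ideal in (A**, first Arens product). (3) If Z̃₁ℓ(A**) = Z̃₁ʳ(A**) = A, then A is a two-sided ideal in A**. -/

import Mathlib

open NormedSpace Filter Topology

noncomputable section

set_option linter.unusedSectionVars false

/-- The Arens adjoint of a bounded bilinear map `m : X × Y → Z`:
`⟨adjB m z' x, y⟩ = ⟨z', m x y⟩`. -/
def adjB {X Y Z : Type*} [NormedAddCommGroup X] [NormedSpace ℂ X]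
    [NormedAddCommGroup Y] [NormedSpace ℂ Y] [NormedAddCommGroup Z] [NormedSpace ℂ Z]
    (m : X →L[ℂ] Y →L[ℂ] Z) : StrongDual ℂ Z →L[ℂ] X →L[ℂ] StrongDual ℂ Y :=
  ((ContinuousLinearMap.compL ℂ X (Y →L[ℂ] Z) (Y →L[ℂ] ℂ)).flip m).comp
    (ContinuousLinearMap.compL ℂ Y Z ℂ)

instance complexIsTopologicalAddGroup : IsTopologicalAddGroup ℂ := inferInstance

variable (A : Type*) [NonUnitalNormedRing A] [NormedSpace ℂ A]
  [SMulCommClass ℂ A A] [IsScalarTower ℂ A A] [CompleteSpace A]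

/-- The first Arens product on the bidual `A**`, obtained by the usual three-step
construction: `(a'·a)(b) = a'(ab)`, `(a''·a')(a) = a''(a'·a)`, `(a''b'')(a') = a''(b''·a')`. -/
def arens : StrongDual ℂ (StrongDual ℂ A) →L[ℂ] StrongDual ℂ (StrongDual ℂ A) →L[ℂ] StrongDual ℂ (StrongDual ℂ A) :=
  adjB (adjB (adjB (ContinuousLinearMap.mul ℂ A)))

/-- The left weak topological center `Z̃₁ℓ(A**)`:
those `a''` for which `b'' ↦ a''b''` is weak*-to-weak continuous on `A**`. -/
def wkCenterL : Set (StrongDual ℂ (StrongDual ℂ A)) :=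
  {a'' | Continuous fun b'' : WeakDual ℂ (StrongDual ℂ A) =>
      (arens A a'' b'' : WeakSpace ℂ (StrongDual ℂ (StrongDual ℂ A)))}

/-- The right weak topological center `Z̃₁ʳ(A**)`:
those `a''` for which `b'' ↦ b''a''` is weak*-to-weak continuous on `A**`. -/
def wkCenterR : Set (StrongDual ℂ (StrongDual ℂ A)) :=
  {a'' | Continuous fun b'' : WeakDual ℂ (StrongDual ℂ A) =>
      (arens A b'' a'' : WeakSpace ℂ (StrongDual ℂ (StrongDual ℂ A)))}

/-- The topological center `Z₁(A**)`:
those `a''` for which `b'' ↦ a''b''` is weak*-to-weak* continuous on `A**`. -/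
def topCenterL : Set (StrongDual ℂ (StrongDual ℂ A)) :=
  {a'' | Continuous fun b'' : WeakDual ℂ (StrongDual ℂ A) =>
      (arens A a'' b'' : WeakDual ℂ (StrongDual ℂ A))}

/-! ### Auxiliary results -/

/-- Finite interpolation: any element of the bidual agrees with (the image of) some element
of `B` on any finite set of functionals.  This is the algebraic heart of Goldstine's theorem
(full-space version). -/
theorem findim_interp {B : Type*} [NormedAddCommGroup B] [NormedSpace ℂ B]
    (s : Finset (StrongDual ℂ B)) (x : StrongDual ℂ (StrongDual ℂ B)) :
    ∃ a : B, ∀ y ∈ s, y a = x y := by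
  classical
  set T : B →ₗ[ℂ] (s → ℂ) :=
    { toFun := fun a y => (y : StrongDual ℂ B) a
      map_add' := by intro a b; ext y; simp
      map_smul' := by intro c a; ext y; simp }
  by_contra h
  push_neg at h
  have hv : (fun y : s => x y) ∉ LinearMap.range T := by
    rintro ⟨a, ha⟩
    obtain ⟨y, hy, hne⟩ := h a
    exact hne (congrFun ha ⟨y, hy⟩)
  obtain ⟨f, hfv, hf⟩ := (LinearMap.range T).exists_dual_map_eq_bot_of_notMem hv inferInstance
  have hfw : ∀ w : s → ℂ, f w = ∑ y : s, w y * f (Pi.single y (1:ℂ)) := by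
    intro w
    have hw : w = ∑ y : s, w y • (Pi.single y (1:ℂ) : s → ℂ) := by
      ext z
      rw [Finset.sum_apply]
      simp [Pi.single_apply, eq_comm]
    conv_lhs => rw [hw, map_sum]
    simp only [map_smul, smul_eq_mul]
  set g : StrongDual ℂ B := ∑ y : s, f (Pi.single y (1:ℂ)) • (y : StrongDual ℂ B) with hg
  have hg0 : g = 0 := by
    ext a
    have hmem : f (T a) = 0 := by
      have h2 : f (T a) ∈ Submodule.map f (LinearMap.range T) :=
        Submodule.mem_map_of_mem ⟨a, rfl⟩
      rw [hf] at h2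
      simpa using h2
    rw [hfw] at hmem
    rw [hg]
    simp only [ContinuousLinearMap.coe_sum', Finset.sum_apply, ContinuousLinearMap.coe_smul',
      Pi.smul_apply, smul_eq_mul, ContinuousLinearMap.zero_apply]
    rw [← hmem]
    exact Finset.sum_congr rfl fun y _ => mul_comm _ _
  have hx0 : x g = 0 := by rw [hg0]; simp
  rw [hg, map_sum] at hx0
  simp only [map_smul, smul_eq_mul] at hx0
  rw [hfw] at hfv
  exact hfv (by rw [← hx0]; exact Finset.sum_congr rfl fun y _ => mul_comm _ _)

/-- The canonical embedding of `A` into its bidual, regarded as a map into the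
weak-star bidual. -/
def jmap : A → WeakDual ℂ (StrongDual ℂ A) := fun a => inclusionInDoubleDual ℂ A a

/-- Goldstine's theorem (full-space version): the canonical image of `A` is
weak-star dense in `A**`. -/
theorem goldstine (x : WeakDual ℂ (StrongDual ℂ A)) : x ∈ closure (Set.range (jmap A)) := by
  classical
  set e : WeakDual ℂ (StrongDual ℂ A) → (StrongDual ℂ A → ℂ) :=
    fun v y => topDualPairing ℂ (StrongDual ℂ A) v y with he
  have hind : IsInducing e := ⟨rfl⟩
  rw [hind.closure_eq_preimage_closure_image, Set.mem_preimage, mem_closure_iff_nhds]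
  intro U hU
  rw [nhds_pi, Filter.mem_pi] at hU
  obtain ⟨I, hIfin, W, hW, hWV⟩ := hU
  obtain ⟨a, ha⟩ := findim_interp hIfin.toFinset x
  refine ⟨e (jmap A a), hWV fun y hy => ?_, Set.mem_image_of_mem e (Set.mem_range_self a)⟩
  have hya : y a = x y := ha y (hIfin.mem_toFinset.mpr hy)
  have hxy : e x y ∈ W y := mem_of_mem_nhds (hW y)
  show e (jmap A a) y ∈ W y
  have heq : e (jmap A a) y = e x y := by
    simp only [he, topDualPairing_apply, jmap]
    exact hya
  rw [heq]; exact hxy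

/-- The multiplicativity of the canonical embedding with respect to the first
Arens product. -/
theorem arens_incl (a b : A) :
    arens A (inclusionInDoubleDual ℂ A a) (inclusionInDoubleDual ℂ A b)
      = inclusionInDoubleDual ℂ A (a * b) := by
  ext a'; rfl

/-- Key step for the left center: if `a ∈ A` lies in `Z̃₁ℓ(A**)`, then `a · b'' ∈ A`
for all `b'' ∈ A**`. -/
theorem keyL (a : A) (hx : inclusionInDoubleDual ℂ A a ∈ wkCenterL A)
    (b'' : StrongDual ℂ (StrongDual ℂ A)) :
    arens A (inclusionInDoubleDual ℂ A a) b'' ∈ Set.range (inclusionInDoubleDual ℂ A) := by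
  rw [wkCenterL, Set.mem_setOf_eq] at hx
  have hmapsTo : Set.MapsTo (fun c'' : WeakDual ℂ (StrongDual ℂ A) =>
      arens A (inclusionInDoubleDual ℂ A a) c'')
      (Set.range (jmap A)) (Set.range (inclusionInDoubleDual ℂ A)) := by
    rintro - ⟨b, rfl⟩
    exact ⟨a * b, (arens_incl A a b).symm⟩
  have h1 := map_mem_closure hx (goldstine A b'') hmapsTo
  have hiso : Isometry (inclusionInDoubleDual ℂ A) := (inclusionInDoubleDualLi ℂ).isometry
  exact hiso.isClosedEmbedding.isClosed_range.closure_subset h1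

/-- Key step for the right center: if `a ∈ A` lies in `Z̃₁ʳ(A**)`, then `b'' · a ∈ A`
for all `b'' ∈ A**`. -/
theorem keyR (a : A) (hx : inclusionInDoubleDual ℂ A a ∈ wkCenterR A)
    (b'' : StrongDual ℂ (StrongDual ℂ A)) :
    arens A b'' (inclusionInDoubleDual ℂ A a) ∈ Set.range (inclusionInDoubleDual ℂ A) := by
  rw [wkCenterR, Set.mem_setOf_eq] at hx
  have hmapsTo : Set.MapsTo (fun c'' : WeakDual ℂ (StrongDual ℂ A) =>
      arens A c'' (inclusionInDoubleDual ℂ A a))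
      (Set.range (jmap A)) (Set.range (inclusionInDoubleDual ℂ A)) := by
    rintro - ⟨b, rfl⟩
    exact ⟨b * a, (arens_incl A b a).symm⟩
  have h1 := map_mem_closure hx (goldstine A b'') hmapsTo
  have hiso : Isometry (inclusionInDoubleDual ℂ A) := (inclusionInDoubleDualLi ℂ).isometry
  exact hiso.isClosedEmbedding.isClosed_range.closure_subset h1

/-- with `A` regarded as a subalgebra of `A**` via the canonical embedding:
(1) if `Z̃₁ℓ(A**) = A` then `A` is a right ideal of `(A**, first Arens product)`;
(2) if `Z̃₁ʳ(A**) = A` then `A` is a left ideal;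
(3) if both centers equal `A` then `A` is a two-sided ideal. -/
theorem stmt5 :
    (wkCenterL A = Set.range (inclusionInDoubleDual ℂ A) →
      ∀ x ∈ Set.range (inclusionInDoubleDual ℂ A), ∀ b'' : StrongDual ℂ (StrongDual ℂ A),
        arens A x b'' ∈ Set.range (inclusionInDoubleDual ℂ A)) ∧
    (wkCenterR A = Set.range (inclusionInDoubleDual ℂ A) →
      ∀ x ∈ Set.range (inclusionInDoubleDual ℂ A), ∀ b'' : StrongDual ℂ (StrongDual ℂ A),
        arens A b'' x ∈ Set.range (inclusionInDoubleDual ℂ A)) ∧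
    (wkCenterL A = Set.range (inclusionInDoubleDual ℂ A) →
      wkCenterR A = Set.range (inclusionInDoubleDual ℂ A) →
      ∀ x ∈ Set.range (inclusionInDoubleDual ℂ A), ∀ b'' : StrongDual ℂ (StrongDual ℂ A),
        arens A x b'' ∈ Set.range (inclusionInDoubleDual ℂ A) ∧
        arens A b'' x ∈ Set.range (inclusionInDoubleDual ℂ A)) := by
  have hL : wkCenterL A = Set.range (inclusionInDoubleDual ℂ A) →
      ∀ x ∈ Set.range (inclusionInDoubleDual ℂ A), ∀ b'' : StrongDual ℂ (StrongDual ℂ A),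
        arens A x b'' ∈ Set.range (inclusionInDoubleDual ℂ A) := by
    rintro h - ⟨a, rfl⟩ b''
    exact keyL A a (by rw [h]; exact Set.mem_range_self a) b''
  have hR : wkCenterR A = Set.range (inclusionInDoubleDual ℂ A) →
      ∀ x ∈ Set.range (inclusionInDoubleDual ℂ A), ∀ b'' : StrongDual ℂ (StrongDual ℂ A),
        arens A b'' x ∈ Set.range (inclusionInDoubleDual ℂ A) := by
    rintro h - ⟨a, rfl⟩ b''
    exact keyR A a (by rw [h]; exact Set.mem_range_self a) b''
  exact ⟨hL, hR, fun h1 h2 x hx b'' => ⟨hL h1 x hx b'', hR h2 x hx b''⟩⟩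

end
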